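/- Let F₃ be the free group on generators a, b, c, and let w ∈ F₃. If there exist ε₁, ε₂, ε₃, ε₄ ∈ {1, -1} such that a^{ε₁} * w * b^{ε₂} * w⁻¹ is conjugate in F₃ to a^{ε₃} * b^{ε₄}, then w lies in the subgroup of F₃ generated by a and b. -/

import Mathlib

namespace FG3

abbrev Λ := Fin 3 × Bool
abbrev F := FreeGroup (Fin 3)

open FreeGroup

def notL (x : Λ) : Λ := (x.1, !x.2)

@[simp] lemma notL_notL (x : Λ) : notL (notL x) = x := by simp [notL]

lemma notL_ne (x : Λ) : notL x ≠ x := by simp [notL, Prod.ext_iff]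

/-- reducedness as a chain condition -/
def Reduced (L : List Λ) : Prop := List.Chain' (fun x y => ¬(x.1 = y.1 ∧ x.2 = !y.2)) L

lemma reduce_eq_self_of_reduced : ∀ {L : List Λ}, Reduced L → reduce L = L := by
  intro L
  induction L with
  | nil => intro _; rfl
  | cons x L ih =>
    intro h
    have hL : Reduced L := h.tail
    have hred : reduce L = L := ih hL
    rw [reduce.cons, hred]
    cases L with
    | nil => rfl
    | cons y t =>
      have : ¬(x.1 = y.1 ∧ x.2 = !y.2) := (List.isChain_cons_cons.mp h).1
      simp [this]

lemma reduced_of_reduce_eq_self : ∀ {L : List Λ}, reduce L = L → Reduced L := by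
  intro L
  induction L with
  | nil => intro _; exact List.isChain_nil
  | cons x L ih =>
    intro h
    rw [reduce.cons] at h
    rcases hL : reduce L with _ | ⟨y, t⟩
    · rw [hL] at h
      simp at h
      subst h
      exact List.isChain_singleton x
    · rw [hL] at h
      by_cases hc : x.1 = y.1 ∧ x.2 = !y.2
      · exfalso
        obtain ⟨h1, h2⟩ := hc
        simp only [h1, h2, and_self, if_pos] at h
        have hlen : (reduce L).length ≤ L.length := (Red.length_le reduce.red)
        rw [hL, h] at hlen
        simp at hlen
      · simp only [hc, if_false] at h
        have hLeq : L = y :: t := by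
          have := congrArg List.tail h
          simp at this
          exact this.symm
        have : reduce L = L := by rw [hL, hLeq]
        have hRL := ih this
        rw [hLeq] at hRL ⊢
        exact List.isChain_cons_cons.mpr ⟨hc, hRL⟩

lemma reduced_toWord (g : F) : Reduced g.toWord :=
  reduced_of_reduce_eq_self (reduce_toWord g)

lemma toWord_mk_of_reduced {L : List Λ} (h : Reduced L) : (mk L).toWord = L := by
  rw [toWord_mk, reduce_eq_self_of_reduced h]

lemma reduced_invRev {L : List Λ} (h : Reduced L) : Reduced (invRev L) := by
  apply reduced_of_reduce_eq_self
  rw [reduce_invRev, reduce_eq_self_of_reduced h]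

@[simp] lemma invRev_singleton (x : Λ) : invRev [x] = [notL x] := by
  simp [invRev, notL]

lemma invRev_append' (L₁ L₂ : List Λ) : invRev (L₁ ++ L₂) = invRev L₂ ++ invRev L₁ := by
  simp [invRev]

lemma invRev_cons (x : Λ) (L : List Λ) : invRev (x :: L) = invRev L ++ [notL x] := by
  simp [invRev, notL]

lemma mk_cons (x : Λ) (L : List Λ) : mk (x :: L) = mk [x] * mk L := by
  rw [mul_mk]; rfl

lemma inv_mk_singleton (x : Λ) : (mk [x])⁻¹ = mk [notL x] := by
  rw [inv_mk, invRev_singleton]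

lemma mk_singleton_mul_notL (x : Λ) : mk [x] * mk [notL x] = 1 := by
  rw [mul_mk]
  rcases x with ⟨i, b⟩
  have : FreeGroup.Red.Step ([(i, b), (i, !b)] : List Λ) [] := Red.Step.cons_not
  calc mk ([(i,b)] ++ [notL (i,b)]) = mk [] := Quot.sound this
  _ = 1 := (one_eq_mk).symm

lemma mk_notL_mul (x : Λ) : mk [notL x] * mk [x] = 1 := by
  have := mk_singleton_mul_notL (notL x)
  rwa [notL_notL] at this


lemma cancel_iff (x y : Λ) : (x.1 = y.1 ∧ x.2 = !y.2) ↔ x = notL y := by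
  simp [notL, Prod.ext_iff]

lemma eq_notL_comm {x y : Λ} (h : x = notL y) : y = notL x := by
  rw [h, notL_notL]

def cfree (L : List Λ) : Prop := ∀ x ∈ L, x.1 ≠ 2

lemma cfree_nil : cfree [] := by intro x hx; simp at hx

lemma cfree_invRev {L : List Λ} (h : cfree L) : cfree (invRev L) := by
  intro x hx
  have hx' : ∃ a ∈ L, ((a : Λ).1, !a.2) = x := by simpa [invRev] using hx
  obtain ⟨a, ha, rfl⟩ := hx'
  simpa using h a ha

lemma cfree_toWord_mul {g h : F} (hg : cfree g.toWord) (hh : cfree h.toWord) :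
    cfree (g * h).toWord := by
  intro x hx
  have := (toWord_mul_sublist g h).mem hx
  rcases List.mem_append.mp this with h' | h'
  · exact hg x h'
  · exact hh x h'

lemma cfree_toWord_inv {g : F} (hg : cfree g.toWord) : cfree g⁻¹.toWord := by
  rw [toWord_inv]; exact cfree_invRev hg

lemma sandwich_mk (y : Λ) (M : List Λ) :
    mk (y :: (M ++ [notL y])) = mk [y] * mk M * mk [notL y] := by
  rw [mul_mk, mul_mk]
  simp

/-- Conjugating a reduced sandwich form by one letter. -/
lemma conj_letter (g : F) (x : Λ) (u v : List Λ)
    (hW : g.toWord = u ++ v ++ invRev u) (hv : cfree v) :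
    ∃ u' v', (mk [x] * g * (mk [x])⁻¹).toWord = u' ++ v' ++ invRev u' ∧ cfree v' := by
  have hg : g = mk (u ++ v ++ invRev u) := by rw [← hW, mk_toWord]
  have hRed : Reduced (u ++ v ++ invRev u) := by rw [← hW]; exact reduced_toWord g
  rcases u with _ | ⟨y, u₁⟩
  · -- u = []
    simp only [invRev_empty, List.append_nil, List.nil_append] at hg hRed hW
    by_cases hx2 : x.1 = 2
    · rcases v with _ | ⟨z, v₁⟩
      · -- g = 1
        refine ⟨[], [], ?_, cfree_nil⟩
        have hg1 : g = 1 := by rw [hg]; exact one_eq_mk.symm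
        have h1 : mk [x] * g * (mk [x])⁻¹ = 1 := by rw [hg1]; group
        rw [h1, toWord_one]
        simp
      · -- result [x] ++ v ++ [notL x]
        refine ⟨[x], z :: v₁, ?_, hv⟩
        have helt : mk [x] * g * (mk [x])⁻¹ = mk ([x] ++ (z :: v₁) ++ invRev [x]) := by
          rw [hg, inv_mk_singleton, mul_mk, mul_mk, invRev_singleton]
        rw [helt]
        apply toWord_mk_of_reduced
        rw [invRev_singleton, List.append_assoc]
        apply List.isChain_append.mpr
        refine ⟨List.isChain_singleton x, ?_, ?_⟩
        · apply List.isChain_append.mpr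
          refine ⟨hRed, List.isChain_singleton _, ?_⟩
          intro a ha b hb
          simp only [List.head?_cons, Option.mem_some_iff] at hb
          subst hb
          have ha2 : a.1 ≠ 2 := hv a (List.mem_of_mem_getLast? ha)
          rw [cancel_iff]
          intro hc
          rw [hc] at ha2
          exact ha2 hx2
        · intro a ha b hb
          simp only [List.getLast?_singleton, Option.mem_some_iff] at ha
          subst ha
          simp only [List.append_eq, List.head?_append, List.head?_cons] at hb
          have hb' : b = z := by
            have h2 : z = b := by simpa using hb
            exact h2.symm
          subst hb'
          have hz2 : b.1 ≠ 2 := hv b (by simp)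
          intro ⟨h1, _⟩
          exact hz2 (h1.symm.trans hx2)
    · -- x is an a/b-letter : whole conjugate is cfree
      refine ⟨[], (mk [x] * g * (mk [x])⁻¹).toWord, by simp, ?_⟩
      have hgc : cfree g.toWord := by rw [hW]; exact hv
      have h1 : cfree (mk [x] : F).toWord := by
        intro a ha
        rw [toWord_mk, reduce_singleton] at ha
        simp at ha
        subst ha; exact hx2
      exact cfree_toWord_mul (cfree_toWord_mul h1 hgc) (cfree_toWord_inv h1)
  · -- u = y :: u₁
    have hgdec : g = mk [y] * mk (u₁ ++ v ++ invRev u₁) * mk [notL y] := by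
      rw [hg, ← sandwich_mk]
      congr 1
      rw [invRev_cons]
      simp
    have hcore : Reduced (u₁ ++ v ++ invRev u₁) := by
      apply hRed.infix
      refine ⟨[y], [notL y], ?_⟩
      rw [invRev_cons]
      simp
    by_cases hxy : x = notL y
    · -- cancellation on both sides
      refine ⟨u₁, v, ?_, hv⟩
      have helt : mk [x] * g * (mk [x])⁻¹ = mk (u₁ ++ v ++ invRev u₁) := by
        rw [hgdec, hxy, inv_mk_singleton, notL_notL]
        have h1 : mk [notL y] * mk [y] = (1 : F) := mk_notL_mul y
        calc mk [notL y] * (mk [y] * mk (u₁ ++ v ++ invRev u₁) * mk [notL y]) * mk [y]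
            = (mk [notL y] * mk [y]) * mk (u₁ ++ v ++ invRev u₁) * (mk [notL y] * mk [y]) := by
              group
          _ = mk (u₁ ++ v ++ invRev u₁) := by rw [h1]; group
      rw [helt]
      exact toWord_mk_of_reduced hcore
    · -- no cancellation
      refine ⟨x :: y :: u₁, v, ?_, hv⟩
      have helt : mk [x] * g * (mk [x])⁻¹ =
          mk ([x] ++ (y :: u₁ ++ v ++ invRev (y :: u₁)) ++ [notL x]) := by
        rw [hg, inv_mk_singleton, mul_mk, mul_mk]
      rw [helt]
      have hlist : ([x] ++ (y :: u₁ ++ v ++ invRev (y :: u₁)) ++ [notL x])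
          = (x :: y :: u₁) ++ v ++ invRev (x :: y :: u₁) := by
        rw [invRev_cons x (y :: u₁)]
        simp
      rw [hlist, ← hlist]
      apply toWord_mk_of_reduced
      rw [List.append_assoc]
      apply List.isChain_append.mpr
      refine ⟨List.isChain_singleton x, ?_, ?_⟩
      · apply List.isChain_append.mpr
        refine ⟨hRed, List.isChain_singleton _, ?_⟩
        intro a ha b hb
        simp only [List.head?_cons, Option.mem_some_iff] at hb
        subst hb
        have hsh : (y :: u₁) ++ v ++ invRev (y :: u₁)
            = (y :: (u₁ ++ v ++ invRev u₁)) ++ [notL y] := by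
          rw [invRev_cons]; simp
        rw [hsh, List.getLast?_concat] at ha
        have hlast : a = notL y := by
          have h2 : notL y = a := by simpa using ha
          exact h2.symm
        subst hlast
        rw [cancel_iff, notL_notL]
        intro hc
        exact hxy hc.symm
      · intro a ha b hb
        simp only [List.getLast?_singleton, Option.mem_some_iff] at ha
        subst ha
        have hb' : b = y := by
          simp at hb
          tauto
        subst hb'
        rw [cancel_iff]
        exact hxy

lemma conj_form (l : List Λ) (h : F) (hh : cfree h.toWord) :
    ∃ u v, (mk l * h * (mk l)⁻¹).toWord = u ++ v ++ invRev u ∧ cfree v := by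
  induction l with
  | nil =>
    refine ⟨[], h.toWord, ?_, hh⟩
    rw [← one_eq_mk]
    simp
  | cons x l ih =>
    obtain ⟨u, v, hW, hv⟩ := ih
    have hsplit : mk (x :: l) * h * (mk (x :: l))⁻¹
        = mk [x] * (mk l * h * (mk l)⁻¹) * (mk [x])⁻¹ := by
      rw [mk_cons]; group
    rw [hsplit]
    exact conj_letter _ x u v hW hv

lemma mk_single_true (i : Fin 3) : mk [(i, true)] = of i := rfl

lemma mk_single_false (i : Fin 3) : mk [(i, false)] = (of i)⁻¹ := by
  have h := inv_mk_singleton ((i, true) : Λ)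
  simp only [notL, Bool.not_true] at h
  rw [← h]
  rfl

lemma mk_single_mem_closure_of_fst (x : Λ) :
    mk [x] ∈ Subgroup.closure ({of x.1} : Set F) := by
  rcases x with ⟨i, b⟩
  cases b
  · rw [mk_single_false]
    exact inv_mem (Subgroup.subset_closure rfl)
  · rw [mk_single_true]
    exact Subgroup.subset_closure rfl

lemma mk_single_comm_of_fst {x y : Λ} (h : x.1 = y.1) :
    mk [x] * mk [y] = mk [y] * mk [x] := by
  rcases x with ⟨i, bx⟩
  rcases y with ⟨j, c⟩
  simp only at h
  subst h
  cases bx <;> cases c <;>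
    simp only [mk_single_true, mk_single_false] <;> group

lemma conj_b_form (β : Λ) (hβ : β.1 = 1) (l : List Λ) :
    ∃ (u : List Λ) (z : F), (mk l * mk [β] * (mk l)⁻¹).toWord = u ++ [β] ++ invRev u
      ∧ mk l = mk u * z ∧ z ∈ Subgroup.closure ({of 1} : Set F) := by
  induction l with
  | nil =>
    refine ⟨[], 1, ?_, by rw [mul_one], one_mem _⟩
    rw [← one_eq_mk]
    simp only [one_mul, inv_one, mul_one, invRev_empty, List.append_nil, List.nil_append]
    rw [toWord_mk, reduce_singleton]
  | cons x l ih =>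
    obtain ⟨u, z, hW, hl, hz⟩ := ih
    set G := mk l * mk [β] * (mk l)⁻¹ with hGdef
    have hsplit : mk (x :: l) * mk [β] * (mk (x :: l))⁻¹ = mk [x] * G * (mk [x])⁻¹ := by
      rw [mk_cons, hGdef]; group
    rcases u with _ | ⟨y, u₁⟩
    · -- u = [] : G = mk [β]
      have hG : G = mk [β] := by
        have := mk_toWord (x := G)
        rw [hW] at this
        simpa using this.symm
      by_cases hx1 : x.1 = 1
      · refine ⟨[], mk [x] * z, ?_, ?_, ?_⟩
        · rw [hsplit, hG]
          have hcomm : mk [x] * mk [β] = mk [β] * mk [x] :=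
            mk_single_comm_of_fst (by rw [hx1, hβ])
          have : mk [x] * mk [β] * (mk [x])⁻¹ = mk [β] := by
            rw [hcomm]; group
          rw [this, toWord_mk, reduce_singleton]
          simp
        · rw [mk_cons, hl, ← one_eq_mk] at *
          group
        · exact mul_mem (by
            have := mk_single_mem_closure_of_fst x
            rwa [hx1] at this) hz
      · refine ⟨[x], z, ?_, ?_, hz⟩
        · rw [hsplit, hG, inv_mk_singleton, mul_mk, mul_mk, invRev_singleton]
          apply toWord_mk_of_reduced
          refine List.isChain_cons_cons.mpr ⟨?_, List.isChain_cons_cons.mpr ⟨?_, List.isChain_singleton _⟩⟩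
          · rw [cancel_iff]
            intro hc
            apply hx1
            rw [hc]
            simpa [notL] using hβ
          · rw [cancel_iff, notL_notL]
            intro hc
            exact hx1 (hc ▸ hβ)
        · rw [mk_cons, hl, ← one_eq_mk]
          group
    · -- u = y :: u₁
      have hg : G = mk ((y :: u₁) ++ [β] ++ invRev (y :: u₁)) := by rw [← hW, mk_toWord]
      have hRed : Reduced ((y :: u₁) ++ [β] ++ invRev (y :: u₁)) := by
        rw [← hW]; exact reduced_toWord G
      have hgdec : G = mk [y] * mk (u₁ ++ [β] ++ invRev u₁) * mk [notL y] := by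
        rw [hg, ← sandwich_mk]
        congr 1
        rw [invRev_cons]
        simp
      have hcore : Reduced (u₁ ++ [β] ++ invRev u₁) := by
        apply hRed.infix
        refine ⟨[y], [notL y], ?_⟩
        rw [invRev_cons]
        simp
      by_cases hxy : x = notL y
      · refine ⟨u₁, z, ?_, ?_, hz⟩
        · rw [hsplit]
          have helt : mk [x] * G * (mk [x])⁻¹ = mk (u₁ ++ [β] ++ invRev u₁) := by
            rw [hgdec, hxy, inv_mk_singleton, notL_notL]
            have h1 : mk [notL y] * mk [y] = (1 : F) := mk_notL_mul y
            calc mk [notL y] * (mk [y] * mk (u₁ ++ [β] ++ invRev u₁) * mk [notL y]) * mk [y]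
                = (mk [notL y] * mk [y]) * mk (u₁ ++ [β] ++ invRev u₁)
                    * (mk [notL y] * mk [y]) := by group
              _ = mk (u₁ ++ [β] ++ invRev u₁) := by rw [h1]; group
          rw [helt]
          exact toWord_mk_of_reduced hcore
        · rw [mk_cons, hl, hxy]
          rw [mk_cons y u₁, ← mul_assoc, ← mul_assoc, mk_notL_mul, one_mul]
      · refine ⟨x :: y :: u₁, z, ?_, ?_, hz⟩
        · rw [hsplit]
          have helt : mk [x] * G * (mk [x])⁻¹ =
              mk ([x] ++ ((y :: u₁) ++ [β] ++ invRev (y :: u₁)) ++ [notL x]) := by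
            rw [hg, inv_mk_singleton, mul_mk, mul_mk]
          rw [helt]
          have hlist : ([x] ++ ((y :: u₁) ++ [β] ++ invRev (y :: u₁)) ++ [notL x])
              = (x :: y :: u₁) ++ [β] ++ invRev (x :: y :: u₁) := by
            rw [invRev_cons x (y :: u₁)]
            simp
          rw [hlist]
          apply toWord_mk_of_reduced
          rw [← hlist, List.append_assoc]
          apply List.isChain_append.mpr
          refine ⟨List.isChain_singleton x, ?_, ?_⟩
          · apply List.isChain_append.mpr
            refine ⟨hRed, List.isChain_singleton _, ?_⟩
            intro a ha b hb
            simp only [List.head?_cons, Option.mem_some_iff] at hb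
            subst hb
            have hsh : (y :: u₁) ++ [β] ++ invRev (y :: u₁)
                = (y :: (u₁ ++ [β] ++ invRev u₁)) ++ [notL y] := by
              rw [invRev_cons]; simp
            rw [hsh, List.getLast?_concat] at ha
            have hlast : a = notL y := by
              have h2 : notL y = a := by simpa using ha
              exact h2.symm
            subst hlast
            rw [cancel_iff, notL_notL]
            intro hc
            exact hxy hc.symm
          · intro a ha b hb
            simp only [List.getLast?_singleton, Option.mem_some_iff] at ha
            subst ha
            have hb' : b = y := by
              simp at hb
              tauto
            subst hb'
            rw [cancel_iff]
            exact hxy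
        · rw [mk_cons, hl, mk_cons x (y :: u₁), mul_assoc]

def cpos (W : List Λ) (p : ℕ) : Prop := ∃ h : p < W.length, (W[p]'h).1 = 2

lemma get3_left (u v w : List Λ) (i : ℕ) (hi : i < u.length)
    (h : i < (u ++ v ++ w).length) : (u ++ v ++ w)[i] = u[i] := by
  rw [List.getElem_append_left (by simp; omega), List.getElem_append_left hi]

lemma get3_mid (u v w : List Λ) (i : ℕ) (h1 : u.length ≤ i) (h2 : i < u.length + v.length)
    (h : i < (u ++ v ++ w).length) : (u ++ v ++ w)[i] = v[i - u.length]'(by omega) := by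
  rw [List.getElem_append_left (by simp; omega), List.getElem_append_right h1]

lemma get3_right (u v w : List Λ) (i : ℕ) (h1 : u.length + v.length ≤ i)
    (h : i < (u ++ v ++ w).length) :
    (u ++ v ++ w)[i] = w[i - u.length - v.length]'(by simp at h; omega) := by
  rw [List.getElem_append_right (by simp; omega)]
  congr 1
  simp
  omega

lemma getElem_idx_congr {l : List Λ} {i j : ℕ} (h : i = j) (hi : i < l.length) :
    l[i]'hi = l[j]'(h ▸ hi) := by subst h; rfl

lemma getElem_invRev (u : List Λ) (j : ℕ) (h : j < (invRev u).length) :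
    (invRev u)[j] = notL (u[u.length - 1 - j]'(by simp at h; omega)) := by
  simp only [invRev]
  rw [List.getElem_reverse, List.getElem_map]
  rw [getElem_idx_congr (by simp : (List.map (fun g : Λ => ((g.1 : Fin 3), !g.2)) u).length - 1 - j = u.length - 1 - j)]
  rfl

lemma mirror_right {W u v : List Λ} (hW : W = u ++ v ++ invRev u) (hv : cfree v)
    {p : ℕ} (hp : cpos W p) : cpos W (W.length - 1 - p) := by
  obtain ⟨hlt, hc⟩ := hp
  set m := u.length with hm
  set k := v.length with hk
  have hlen : W.length = m + k + m := by
    rw [hW]; simp [invRev_length]; omega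
  subst hW
  by_cases h1 : p < m
  · -- in u
    have hval : (u ++ v ++ invRev u)[p] = u[p] := get3_left _ _ _ _ h1 hlt
    set q := (u ++ v ++ invRev u).length - 1 - p with hq
    have hq1 : m + k ≤ q := by omega
    have hq2 : q < (u ++ v ++ invRev u).length := by omega
    refine ⟨hq2, ?_⟩
    have hval2 := get3_right u v (invRev u) q hq1 hq2
    rw [hval2, getElem_invRev]
    rw [getElem_idx_congr (show u.length - 1 - (q - u.length - v.length) = p by omega)]
    rw [hval] at hc
    simpa [notL] using hc
  · by_cases h2 : p < m + k
    · -- in v : contradiction with cfree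
      exfalso
      have hval := get3_mid u v (invRev u) p (by omega) h2 hlt
      rw [hval] at hc
      exact hv _ (List.getElem_mem _) hc
    · -- in invRev u
      have hval := get3_right u v (invRev u) p (by omega) hlt
      rw [hval, getElem_invRev] at hc
      set q := (u ++ v ++ invRev u).length - 1 - p with hq
      have hq1 : q < m := by omega
      have hq2 : q < (u ++ v ++ invRev u).length := by omega
      refine ⟨hq2, ?_⟩
      have hval2 := get3_left u v (invRev u) q hq1 hq2
      rw [hval2]
      rw [getElem_idx_congr (show u.length - 1 - (p - u.length - v.length) = q by omega)] at hc
      simpa [notL] using hc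

lemma mirror_left {W u : List Λ} {ξ μ : Λ} (hξ : ξ.1 ≠ 2) (hμ : μ.1 ≠ 2)
    (hW : W = [ξ] ++ u ++ [μ] ++ invRev u) {p : ℕ} (hp : cpos W p) :
    1 ≤ p ∧ cpos W (W.length - p) := by
  obtain ⟨hlt, hc⟩ := hp
  set m := u.length with hm
  have hW' : W = ξ :: (u ++ [μ] ++ invRev u) := by rw [hW]; simp
  have hlen : W.length = m + m + 2 := by
    rw [hW']; simp [invRev_length]; omega
  subst hW'
  rcases p with _ | i
  · exfalso
    simp only [List.getElem_cons_zero] at hc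
    exact hξ hc
  · have hi : i < (u ++ [μ] ++ invRev u).length := by simpa using hlt
    have hci : ((u ++ [μ] ++ invRev u)[i]'hi).1 = 2 := by
      rw [← hc]
      simp [List.getElem_cons_succ]
    refine ⟨Nat.succ_le_succ (Nat.zero_le _), ?_⟩
    have him : i ≠ m := by
      intro hieq
      have := get3_mid u [μ] (invRev u) i (by omega) (by simp; omega) hi
      rw [this] at hci
      simp [hieq] at hci
      exact hμ hci
    obtain ⟨j, hj⟩ : ∃ j, (ξ :: (u ++ [μ] ++ invRev u)).length - (i+1) = j + 1 := by
      refine ⟨(ξ :: (u ++ [μ] ++ invRev u)).length - (i+1) - 1, ?_⟩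
      simp at hlt ⊢
      omega
    rw [hj]
    have hjlt : j < (u ++ [μ] ++ invRev u).length := by
      simp at hlt hj ⊢
      omega
    refine ⟨by simpa using Nat.succ_lt_succ hjlt, ?_⟩
    rw [List.getElem_cons_succ]
    have hjrel : i + j + 1 = m + m + 1 := by
      simp at hj hlt ⊢
      omega
    by_cases h1 : i < m
    · -- i in u, j in invRev u
      have hj1 : u.length + [μ].length ≤ j := by simp; omega
      rw [get3_right u [μ] (invRev u) j hj1 hjlt, getElem_invRev]
      rw [getElem_idx_congr (show u.length - 1 - (j - u.length - [μ].length) = i by simp; omega)]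
      rw [get3_left u [μ] (invRev u) i h1 hi] at hci
      simpa [notL] using hci
    · -- i in invRev u, j in u
      have hi1 : u.length + [μ].length ≤ i := by simp; omega
      rw [get3_right u [μ] (invRev u) i hi1 hi, getElem_invRev] at hci
      have hjm : j < m := by simp at hi; omega
      rw [get3_left u [μ] (invRev u) j hjm hjlt]
      rw [getElem_idx_congr (show u.length - 1 - (i - u.length - [μ].length) = j by simp; omega)] at hci
      simpa [notL] using hci

lemma chase {W : List Λ}
    (H1 : ∀ p, cpos W p → 1 ≤ p ∧ cpos W (W.length - p))
    (H2 : ∀ p, cpos W p → cpos W (W.length - 1 - p)) :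
    ∀ p, ¬ cpos W p := by
  intro p
  induction p using Nat.strong_induction_on with
  | _ p ih =>
    intro hp
    have hplt : p < W.length := hp.1
    obtain ⟨h1, hq⟩ := H1 p hp
    have hq' := H2 _ hq
    rw [show W.length - 1 - (W.length - p) = p - 1 by omega] at hq'
    exact ih (p - 1) (by omega) hq'

lemma no_c {ρ h₀ : F} (hh : cfree h₀.toWord) {u : List Λ} {ξ μ : Λ}
    (hξ : ξ.1 ≠ 2) (hμ : μ.1 ≠ 2)
    (hW : (ρ * h₀ * ρ⁻¹).toWord = [ξ] ++ u ++ [μ] ++ invRev u) : cfree u := by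
  obtain ⟨u', v', hW', hv'⟩ := conj_form ρ.toWord h₀ hh
  rw [mk_toWord] at hW'
  have H1 := fun p hp => mirror_left hξ hμ hW (p := p) hp
  have H2 := fun p hp => mirror_right hW' hv' (p := p) hp
  have hnone := chase H1 H2
  intro x hx
  intro hx2
  obtain ⟨i, hilt, hieq⟩ := List.mem_iff_getElem.mp hx
  apply hnone (1 + i)
  rw [hW]
  have hlt2 : 1 + i < (([ξ] ++ u) ++ [μ] ++ invRev u).length := by
    simp [invRev_length]; omega
  refine ⟨by simpa using hlt2, ?_⟩
  rw [get3_left ([ξ] ++ u) [μ] (invRev u) (1+i) (by simp; omega) hlt2]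
  rw [List.getElem_append_right (by simp : ([ξ] : List Λ).length ≤ 1 + i)]
  simp only [List.length_singleton, show 1 + i - 1 = i from by omega]
  rw [hieq]
  exact hx2

lemma cfree_mk_mem {l : List Λ} (h : cfree l) :
    mk l ∈ Subgroup.closure ({of 0, of 1} : Set F) := by
  induction l with
  | nil => rw [← one_eq_mk]; exact one_mem _
  | cons x l ih =>
    rw [mk_cons]
    refine mul_mem ?_ (ih fun y hy => h y (List.mem_cons_of_mem _ hy))
    have hx := h x List.mem_cons_self
    have h01 : ({of x.1} : Set F) ⊆ {of 0, of 1} := by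
      have hv2 : x.1.val ≠ 2 := fun hv => hx (Fin.ext hv)
      have hlt := x.1.isLt
      have hval : x.1.val = 0 ∨ x.1.val = 1 := by omega
      rcases hval with h' | h'
      · have : x.1 = 0 := Fin.ext h'
        simp [this]
      · have : x.1 = 1 := Fin.ext h'
        simp [this]
    exact Subgroup.closure_mono h01 (mk_single_mem_closure_of_fst x)

lemma zpow_pm (i : Fin 3) {ε : ℤ} (h : ε = 1 ∨ ε = -1) :
    ∃ s : Bool, of i ^ ε = mk [(i, s)] := by
  rcases h with rfl | rfl
  · exact ⟨true, by rw [zpow_one]; rfl⟩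
  · refine ⟨false, ?_⟩
    rw [zpow_neg, zpow_one, ← mk_single_false]

end FG3

open FreeGroup FG3 in
/-- In the free group `F₃` on `a, b, c`: if for some signs `ε₁, ε₂, ε₃, ε₄ ∈ {1, -1}` the
element `a^ε₁ * w * b^ε₂ * w⁻¹` is conjugate to `a^ε₃ * b^ε₄`, then `w` lies in the subgroup
generated by `a` and `b`. -/
theorem mem_closure_of_conjugate_freeGroup (w : FreeGroup (Fin 3))
    (h : ∃ ε₁ ε₂ ε₃ ε₄ : ℤ,
      (ε₁ = 1 ∨ ε₁ = -1) ∧ (ε₂ = 1 ∨ ε₂ = -1) ∧ (ε₃ = 1 ∨ ε₃ = -1) ∧ (ε₄ = 1 ∨ ε₄ = -1) ∧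
      ∃ r : FreeGroup (Fin 3),
        FreeGroup.of (0 : Fin 3) ^ ε₁ * w * FreeGroup.of (1 : Fin 3) ^ ε₂ * w⁻¹ =
          r * (FreeGroup.of (0 : Fin 3) ^ ε₃ * FreeGroup.of (1 : Fin 3) ^ ε₄) * r⁻¹) :
    w ∈ Subgroup.closure ({FreeGroup.of 0, FreeGroup.of 1} : Set (FreeGroup (Fin 3))) := by
  obtain ⟨ε₁, ε₂, ε₃, ε₄, h1, h2, h3, h4, r, heq⟩ := h
  obtain ⟨s₁, hA⟩ := zpow_pm 0 h1
  obtain ⟨s₂, hB⟩ := zpow_pm 1 h2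
  obtain ⟨s₃, hC⟩ := zpow_pm 0 h3
  obtain ⟨s₄, hD⟩ := zpow_pm 1 h4
  set g₀ : F := FreeGroup.of (0 : Fin 3) ^ ε₃ * FreeGroup.of (1 : Fin 3) ^ ε₄ with hg₀
  have hg₀c : cfree g₀.toWord := by
    rw [hg₀, hC, hD, mul_mk]
    rw [toWord_mk_of_reduced (by
      refine List.isChain_cons_cons.mpr ⟨?_, List.isChain_singleton _⟩
      intro hc
      have : (0 : Fin 3) = 1 := hc.1
      exact absurd this (by decide))]
    intro x hx
    simp at hx
    rcases hx with rfl | rfl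
    · exact (by decide : (0 : Fin 3) ≠ 2)
    · exact (by decide : (1 : Fin 3) ≠ 2)
  obtain ⟨u, z, hWE, hw, hz⟩ := conj_b_form (1, s₂) rfl w.toWord
  rw [mk_toWord] at hWE hw
  have hzc : z ∈ Subgroup.closure ({of 0, of 1} : Set F) :=
    Subgroup.closure_mono (by simp) hz
  rcases u with _ | ⟨y, u₁⟩
  · rw [hw, ← one_eq_mk, one_mul]
    exact hzc
  · suffices hu : cfree (y :: u₁) by
      rw [hw]
      exact mul_mem (cfree_mk_mem hu) hzc
    set α : Λ := (0, s₁) with hα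
    set E : F := w * mk [(1, s₂)] * w⁻¹ with hEdef
    have heq2 : mk [α] * E = r * g₀ * r⁻¹ := by
      rw [← heq, hA, hB, hEdef]
      group
    have hEred : Reduced E.toWord := reduced_toWord E
    by_cases hya : y = notL α
    · -- front cancellation: work with (mk [notL α]) * E⁻¹ instead
      have hEinv : E⁻¹.toWord = (y :: u₁) ++ [notL (1, s₂)] ++ invRev (y :: u₁) := by
        rw [toWord_inv, hWE, invRev_append', invRev_append', invRev_invRev, invRev_singleton]
        simp [List.append_assoc]
      have hGw : (mk [notL α] * E⁻¹).toWord
          = [notL α] ++ (y :: u₁) ++ [notL (1, s₂)] ++ invRev (y :: u₁) := by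
        have he : mk [notL α] * E⁻¹ = mk (notL α :: E⁻¹.toWord) := by
          rw [mk_cons (notL α) E⁻¹.toWord, mk_toWord]
        rw [he, hEinv]
        rw [toWord_mk_of_reduced (by
          refine List.isChain_cons.mpr ⟨?_, by rw [← hEinv]; exact reduced_toWord E⁻¹⟩
          intro b hb
          have hb' : b = y := by
            have h2 : y = b := by simpa using hb
            exact h2.symm
          rw [hb', cancel_iff]
          intro hc
          have hay : α = y := by
            have h2 := congrArg notL hc
            simpa [notL_notL] using h2
          rw [← hay] at hya
          exact notL_ne α hya.symm)]
        simp
      have hconj : mk [notL α] * E⁻¹ = (mk [notL α] * r) * g₀⁻¹ * (mk [notL α] * r)⁻¹ := by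
        have hInv : mk [notL α] = (mk [α])⁻¹ := (inv_mk_singleton α).symm
        have hEeq : E = (mk [α])⁻¹ * (r * g₀ * r⁻¹) := by
          rw [← heq2]; group
        rw [hInv, hEeq]
        group
      refine no_c (ρ := mk [notL α] * r) (h₀ := g₀⁻¹) (cfree_toWord_inv hg₀c)
        (ξ := notL α) (μ := notL (1, s₂)) ?_ ?_ ?_
      · exact (by decide : (0 : Fin 3) ≠ 2)
      · exact (by decide : (1 : Fin 3) ≠ 2)
      · rw [← hconj]
        exact hGw
    · -- no cancellation
      have hGw : (mk [α] * E).toWord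
          = [α] ++ (y :: u₁) ++ [(1, s₂)] ++ invRev (y :: u₁) := by
        have he : mk [α] * E = mk (α :: E.toWord) := by
          rw [mk_cons α E.toWord, mk_toWord]
        rw [he, hWE]
        rw [toWord_mk_of_reduced (by
          refine List.isChain_cons.mpr ⟨?_, by rw [← hWE]; exact hEred⟩
          intro b hb
          have hb' : b = y := by
            have h2 : y = b := by simpa using hb
            exact h2.symm
          rw [hb', cancel_iff]
          intro hc
          apply hya
          rw [hc, notL_notL])]
        simp
      refine no_c (ρ := r) (h₀ := g₀) hg₀c (ξ := α) (μ := (1, s₂)) ?_ ?_ ?_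
      · exact (by decide : (0 : Fin 3) ≠ 2)
      · exact (by decide : (1 : Fin 3) ≠ 2)
      · rw [← heq2]
        exact hGw
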